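/- Let φ : Δ^{0̂} → Δ be a group epimorphism. For every conjugate h in Δ of R₀, R₁ or R₂, there exists a conjugate g in Δ^{0̂} of one of R₁, R₂, R₁^{R₀}, R₂^{R₀} with gφ = h. -/

import Mathlib

/-- The relations making each generator an involution. -/
def rels : Set (FreeGroup (Fin 3)) := {x | ∃ i, x = (FreeGroup.of i) ^ 2}

/-- Δ = C₂ * C₂ * C₂. -/
abbrev Δ := PresentedGroup rels

/-- The generators R₀, R₁, R₂ of Δ. -/
def R (i : Fin 3) : Δ := PresentedGroup.of i

/-- Δ^{0̂}, the normal closure of {R₁, R₂}, an index-2 subgroup of Δ. -/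
def Δ0 : Subgroup Δ := Subgroup.normalClosure {R 1, R 2}

/-- Δ⁺, the even-word subgroup of Δ. -/
def Δplus : Subgroup Δ := Subgroup.closure {R 1 * R 2, R 2 * R 0, R 0 * R 1}

/-- The preimage H φ⁻¹, regarded as a subgroup of Δ. -/
def preim (φ : Δ0 →* Δ) (H : Subgroup Δ) : Subgroup Δ :=
  (H.comap φ).map Δ0.subtype

/-- The kernel of φ, regarded as a subgroup of Δ. -/
def kerS (φ : Δ0 →* Δ) : Subgroup Δ := φ.ker.map Δ0.subtype

/-- The conjugate K^g = g⁻¹ K g. -/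
def conjS (K : Subgroup Δ) (g : Δ) : Subgroup Δ :=
  K.map (MulAut.conj g⁻¹).toMonoidHom

/-- The four involutions R₁, R₂, R₁^{R₀}, R₂^{R₀} generating Δ^{0̂}. -/
def gens : Set Δ := {R 1, R 2, (R 0)⁻¹ * R 1 * R 0, (R 0)⁻¹ * R 2 * R 0}

/-! ### Auxiliary material: torsion in free products -/

namespace Stmt11Aux

open Monoid CoprodI

section Torsion

variable {ι : Type*} [DecidableEq ι] {M : ι → Type*} [∀ i, Group (M i)] [∀ i, DecidableEq (M i)]

lemma prod_injective : Function.Injective (Word.prod : Word M → CoprodI M) :=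
  (Word.equiv (M := M)).symm.injective

lemma prod_eq_one_iff (w : Word M) : w.prod = 1 ↔ w = Word.empty := by
  constructor
  · intro h
    exact prod_injective (by rw [h, Word.prod_empty])
  · rintro rfl; exact Word.prod_empty

lemma equiv_symm_apply (w : Word M) : (Word.equiv (M := M)).symm w = w.prod := rfl

lemma equiv_prod (x : CoprodI M) : (Word.equiv x).prod = x := by
  rw [← equiv_symm_apply]; exact Word.equiv.symm_apply_apply x

lemma torsion_aux : ∀ (n : ℕ) (x : CoprodI M), (Word.equiv x).toList.length ≤ n → x * x = 1 →
    x = 1 ∨ ∃ (i : ι) (m : M i) (c : CoprodI M), x = c⁻¹ * CoprodI.of m * c := by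
  intro n
  induction n with
  | zero =>
    intro x hlen _
    left
    have hw : Word.equiv x = Word.empty :=
      Word.ext (List.length_eq_zero_iff.mp (Nat.le_zero.mp hlen))
    rw [← equiv_prod x, hw, Word.prod_empty]
  | succ n ih =>
    intro x hlen hx2
    have hxw : (Word.equiv x).prod = x := equiv_prod x
    rcases hL : (Word.equiv x).toList with _ | ⟨a, l'⟩
    · left
      rw [← hxw, show Word.equiv x = Word.empty from Word.ext hL, Word.prod_empty]
    · rcases List.eq_nil_or_concat l' with rfl | ⟨mid, b, rfl⟩
      · right
        refine ⟨a.1, a.2, 1, ?_⟩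
        have : x = CoprodI.of a.2 := by
          rw [← hxw]; unfold Word.prod; rw [hL]; simp
        simp [this]
      · rw [List.concat_eq_append] at hL
        by_cases hij : a.1 = b.1
        · -- first and last letters in the same factor: shorten by conjugation
          obtain ⟨i, ma⟩ := a
          obtain ⟨j, mb⟩ := b
          dsimp at hij
          subst hij
          have hx : x = CoprodI.of ma * ((mid.map fun l => CoprodI.of l.2).prod * CoprodI.of mb) := by
            rw [← hxw]; unfold Word.prod; rw [hL]; simp [mul_assoc]
          set z := CoprodI.of mb * x * (CoprodI.of mb)⁻¹ with hzdef
          have hz2 : z * z = 1 := by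
            have : z * z = CoprodI.of mb * (x * x) * (CoprodI.of mb)⁻¹ := by rw [hzdef]; group
            rw [this, hx2]; group
          have hxz : x = (CoprodI.of mb)⁻¹ * z * CoprodI.of mb := by rw [hzdef]; group
          have hz : z = CoprodI.of (mb * ma) * (mid.map fun l => CoprodI.of l.2).prod := by
            rw [hzdef, hx, map_mul]
            simp [mul_assoc]
          have hchain : (⟨i, ma⟩ :: mid : List (Σ i, M i)).Chain'
              (fun l l' => Sigma.fst l ≠ Sigma.fst l') := by
            have hc := (Word.equiv x).chain_ne
            rw [hL] at hc
            exact (List.isChain_append.mp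
              (show List.Chain' _ ((⟨i, ma⟩ :: mid) ++ [⟨i, mb⟩]) from hc)).1
          have hne : ∀ l ∈ mid, Sigma.snd l ≠ 1 := by
            intro l hl
            exact (Word.equiv x).ne_one l (by rw [hL]; simp [hl])
          have hlen' : mid.length + 2 ≤ n + 1 := by
            have h' := hlen; rw [hL] at h'; simp [List.length_append] at h'; omega
          by_cases h1 : mb * ma = 1
          · set Wz : Word M := ⟨mid, hne, (List.isChain_cons.mp hchain).2⟩ with hWz
            have hzprod : Wz.prod = z := by
              unfold Word.prod
              rw [hz, h1, map_one, one_mul]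
            have hlz : (Word.equiv z).toList.length ≤ n := by
              have : Word.equiv z = Wz := by
                rw [← hzprod, ← equiv_symm_apply, Equiv.apply_symm_apply]
              rw [this]
              simp only [hWz]
              omega
            rcases ih z hlz hz2 with h | ⟨k, m, c, hc⟩
            · left; rw [hxz, h]; group
            · right
              exact ⟨k, m, c * CoprodI.of mb, by rw [hxz, hc]; group⟩
          · set Wz : Word M := ⟨⟨i, mb * ma⟩ :: mid, by
                intro l hl
                rcases List.mem_cons.mp hl with rfl | hl
                · exact h1
                · exact hne l hl
                , List.isChain_cons.mpr
                    ⟨(List.isChain_cons.mp hchain).1, (List.isChain_cons.mp hchain).2⟩⟩ with hWz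
            have hzprod : Wz.prod = z := by
              unfold Word.prod
              rw [hz]
              simp [hWz, mul_assoc]
            have hlz : (Word.equiv z).toList.length ≤ n := by
              have : Word.equiv z = Wz := by
                rw [← hzprod, ← equiv_symm_apply, Equiv.apply_symm_apply]
              rw [this]
              simp only [hWz, List.length_cons]
              omega
            rcases ih z hlz hz2 with h | ⟨k, m, c, hc⟩
            · left; rw [hxz, h]; group
            · right
              exact ⟨k, m, c * CoprodI.of mb, by rw [hxz, hc]; group⟩
        · -- first and last letters in different factors: x * x ≠ 1
          exfalso
          set L : List (Σ i, M i) := (a :: mid) ++ [b] with hLdef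
          have hLL : (Word.equiv x).toList = L := by rw [hL, hLdef]; rfl
          set W2 : Word M := ⟨L ++ L, by
              intro l hl
              rcases List.mem_append.mp hl with hl | hl <;>
                exact (Word.equiv x).ne_one l (by rw [hLL]; exact hl)
              , by
              rw [List.isChain_append]
              have hc := (Word.equiv x).chain_ne
              rw [hLL] at hc
              refine ⟨hc, hc, ?_⟩
              intro p hp q hq
              rw [hLdef] at hp hq
              rw [List.getLast?_concat] at hp
              simp at hp hq
              subst hp
              subst hq
              exact fun hh => hij hh.symm⟩ with hW2
          have : W2.prod = x * x := by
            rw [← hxw]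
            unfold Word.prod
            rw [hLL]
            simp [hW2]
          rw [hx2] at this
          have h0 := (prod_eq_one_iff W2).mp this
          have : W2.toList = [] := by rw [h0]; rfl
          simp [hW2, hLdef] at this

end Torsion

/-! ### The cyclic group of order two and its maps -/

abbrev C2 := Multiplicative (ZMod 2)

def g2 : C2 := Multiplicative.ofAdd 1

lemma g2_ne_one : g2 ≠ 1 := by decide

lemma C2cases (x : C2) : x = 1 ∨ x = g2 := by revert x; decide

lemma g2_mul_g2 : g2 * g2 = 1 := by decide

lemma g2_sq : g2 ^ 2 = 1 := by decide

/-- The homomorphism from `C2` sending the generator to an involution. -/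
def involHom {G : Type*} [Group G] (g : G) (hg : g * g = 1) : C2 →* G where
  toFun x := if x = 1 then 1 else g
  map_one' := if_pos rfl
  map_mul' x y := by
    rcases C2cases x with rfl | rfl <;> rcases C2cases y with rfl | rfl <;>
      simp [g2_ne_one, g2_mul_g2, hg]

lemma involHom_g2 {G : Type*} [Group G] (g : G) (hg : g * g = 1) : involHom g hg g2 = g := by
  simp [involHom, g2_ne_one]

/-! ### Basic facts about Δ -/

lemma R_sq (i : Fin 3) : R i * R i = 1 := by
  have h1 : ((FreeGroup.of i) ^ 2 : FreeGroup (Fin 3)) ∈ Subgroup.normalClosure rels :=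
    Subgroup.subset_normalClosure ⟨i, rfl⟩
  have : R i * R i = PresentedGroup.mk rels ((FreeGroup.of i) ^ 2) := by
    rw [pow_two, map_mul]; rfl
  rw [this]
  exact (QuotientGroup.eq_one_iff _).mpr h1

lemma R_inv (i : Fin 3) : (R i)⁻¹ = R i :=
  inv_eq_of_mul_eq_one_right (R_sq i)

noncomputable section

def Fdel : Δ →* CoprodI (fun _ : Fin 3 => C2) :=
  PresentedGroup.toGroup (f := fun i => CoprodI.of (M := fun _ : Fin 3 => C2) (i := i) g2)
    (by rintro r ⟨i, rfl⟩
        rw [map_pow, FreeGroup.lift_apply_of, ← map_pow, g2_sq, map_one])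

def Gdel : CoprodI (fun _ : Fin 3 => C2) →* Δ :=
  CoprodI.lift (fun i => involHom (R i) (R_sq i))

lemma Gdel_comp_Fdel : Gdel.comp Fdel = MonoidHom.id Δ := by
  ext i
  show Gdel (Fdel (PresentedGroup.of i)) = PresentedGroup.of i
  rw [Fdel, PresentedGroup.toGroup.of]
  rw [Gdel, CoprodI.lift_of, involHom_g2]
  rfl

lemma Fdel_comp_Gdel : Fdel.comp Gdel = MonoidHom.id _ := by
  apply CoprodI.ext_hom
  intro i
  apply MonoidHom.ext
  intro m
  rcases C2cases m with rfl | rfl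
  · simp only [MonoidHom.comp_apply, MonoidHom.id_apply, map_one]
  · show Fdel (Gdel (CoprodI.of (M := fun _ : Fin 3 => C2) (i := i) g2))
        = CoprodI.of (M := fun _ : Fin 3 => C2) (i := i) g2
    rw [Gdel, CoprodI.lift_of, involHom_g2]
    show Fdel (PresentedGroup.of i) = _
    rw [Fdel, PresentedGroup.toGroup.of]

def edel : Δ ≃* CoprodI (fun _ : Fin 3 => C2) :=
  MonoidHom.toMulEquiv Fdel Gdel Gdel_comp_Fdel Fdel_comp_Gdel

lemma edel_R (i : Fin 3) : edel (R i) = CoprodI.of (M := fun _ : Fin 3 => C2) (i := i) g2 := by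
  show Fdel (PresentedGroup.of i) = _
  rw [Fdel, PresentedGroup.toGroup.of]

/-- Torsion classification in Δ: every involution is trivial or conjugate to a generator. -/
lemma delta_torsion (x : Δ) (hx : x * x = 1) :
    x = 1 ∨ ∃ (k : Fin 3) (c : Δ), x = c⁻¹ * R k * c := by
  have h2 : edel x * edel x = 1 := by rw [← map_mul, hx, map_one]
  rcases torsion_aux ((Word.equiv (edel x)).toList.length) (edel x) le_rfl h2 with h | ⟨k, m, c, hc⟩
  · left
    exact edel.injective (by rw [h, map_one])
  · rcases C2cases m with rfl | rfl
    · left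
      apply edel.injective
      rw [hc, map_one, map_one]
      simp
    · right
      refine ⟨k, edel.symm c, ?_⟩
      apply edel.injective
      rw [hc]
      simp only [map_mul, map_inv, MulEquiv.apply_symm_apply, edel_R]

end

/-! ### The generators of Δ⁰ -/

lemma gens_sub_Δ0 : gens ⊆ (Δ0 : Set Δ) := by
  have h1 : R 1 ∈ Δ0 := Subgroup.subset_normalClosure (by left; rfl)
  have h2 : R 2 ∈ Δ0 := Subgroup.subset_normalClosure (by right; rfl)
  have hnorm : Δ0.Normal := Subgroup.normalClosure_normal
  intro s hs
  rcases hs with rfl | rfl | rfl | rfl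
  · exact h1
  · exact h2
  · simpa using hnorm.conj_mem _ h1 ((R 0)⁻¹)
  · simpa using hnorm.conj_mem _ h2 ((R 0)⁻¹)

lemma gens_sq {s : Δ} (hs : s ∈ gens) : s * s = 1 := by
  have key : ∀ i : Fin 3, ((R 0)⁻¹ * R i * R 0) * ((R 0)⁻¹ * R i * R 0) = 1 := by
    intro i
    calc ((R 0)⁻¹ * R i * R 0) * ((R 0)⁻¹ * R i * R 0)
        = (R 0)⁻¹ * (R i * (R 0 * (R 0)⁻¹) * R i) * R 0 := by group
      _ = (R 0)⁻¹ * (R i * R i) * R 0 := by rw [mul_inv_cancel, mul_one]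
      _ = 1 := by rw [R_sq]; group
  rcases hs with rfl | rfl | rfl | rfl
  · exact R_sq 1
  · exact R_sq 2
  · exact key 1
  · exact key 2

lemma conj_R0_mem {n : Δ} (hn : n ∈ Subgroup.closure gens) :
    R 0 * n * (R 0)⁻¹ ∈ Subgroup.closure gens := by
  have hg : ∀ s ∈ gens, s ∈ Subgroup.closure gens := fun s hs => Subgroup.subset_closure hs
  have h1 : R 1 ∈ Subgroup.closure gens := hg _ (by left; rfl)
  have h2 : R 2 ∈ Subgroup.closure gens := hg _ (by right; left; rfl)
  have h3 : (R 0)⁻¹ * R 1 * R 0 ∈ Subgroup.closure gens := hg _ (by right; right; left; rfl)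
  have h4 : (R 0)⁻¹ * R 2 * R 0 ∈ Subgroup.closure gens := hg _ (by right; right; right; rfl)
  induction hn using Subgroup.closure_induction with
  | mem s hs =>
    rcases hs with rfl | rfl | rfl | rfl
    · rw [show R 0 * R 1 * (R 0)⁻¹ = (R 0)⁻¹ * R 1 * R 0 by rw [R_inv 0]]
      exact h3
    · rw [show R 0 * R 2 * (R 0)⁻¹ = (R 0)⁻¹ * R 2 * R 0 by rw [R_inv 0]]
      exact h4
    · rw [show R 0 * ((R 0)⁻¹ * R 1 * R 0) * (R 0)⁻¹ = R 1 by group]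
      exact h1
    · rw [show R 0 * ((R 0)⁻¹ * R 2 * R 0) * (R 0)⁻¹ = R 2 by group]
      exact h2
  | one => simpa using Subgroup.one_mem _
  | mul a b _ _ ha hb =>
    rw [show R 0 * (a * b) * (R 0)⁻¹ = (R 0 * a * (R 0)⁻¹) * (R 0 * b * (R 0)⁻¹) by group]
    exact Subgroup.mul_mem _ ha hb
  | inv a _ ha =>
    rw [show R 0 * a⁻¹ * (R 0)⁻¹ = (R 0 * a * (R 0)⁻¹)⁻¹ by group]
    exact Subgroup.inv_mem _ ha

lemma conj_R_mem (i : Fin 3) {n : Δ} (hn : n ∈ Subgroup.closure gens) :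
    R i * n * (R i)⁻¹ ∈ Subgroup.closure gens := by
  have hg : ∀ s ∈ gens, s ∈ Subgroup.closure gens := fun s hs => Subgroup.subset_closure hs
  have h1 : R 1 ∈ Subgroup.closure gens := hg _ (by left; rfl)
  have h2 : R 2 ∈ Subgroup.closure gens := hg _ (by right; left; rfl)
  fin_cases i
  · exact conj_R0_mem hn
  · exact Subgroup.mul_mem _ (Subgroup.mul_mem _ h1 hn) (Subgroup.inv_mem _ h1)
  · exact Subgroup.mul_mem _ (Subgroup.mul_mem _ h2 hn) (Subgroup.inv_mem _ h2)

lemma closure_gens_normal : (Subgroup.closure gens).Normal := by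
  rw [← Subgroup.normalizer_eq_top_iff]
  rw [eq_top_iff]
  intro g _
  refine PresentedGroup.generated_by rels (Subgroup.normalizer (Subgroup.closure gens : Set Δ)) ?_ g
  intro j
  show R j ∈ Subgroup.normalizer (Subgroup.closure gens : Set Δ)
  rw [Subgroup.mem_normalizer_iff]
  intro n
  constructor
  · intro hn
    exact conj_R_mem j hn
  · intro hn
    have := conj_R_mem j hn
    rw [show R j * (R j * n * (R j)⁻¹) * (R j)⁻¹
        = (R j * R j) * n * ((R j)⁻¹ * (R j)⁻¹) by group, R_sq, R_inv, R_sq] at this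
    simpa using this

lemma closure_gens : Subgroup.closure gens = Δ0 := by
  apply le_antisymm
  · rw [Subgroup.closure_le]
    exact gens_sub_Δ0
  · haveI := closure_gens_normal
    apply Subgroup.normalClosure_le_normal
    rintro x (rfl | rfl)
    · exact Subgroup.subset_closure (by left; rfl)
    · exact Subgroup.subset_closure (by right; left; rfl)

lemma gens0_top : Subgroup.closure {x : Δ0 | (x : Δ) ∈ gens} = ⊤ := by
  apply Subgroup.map_injective Δ0.subtype_injective
  rw [MonoidHom.map_closure]
  have himg : Δ0.subtype '' {x : Δ0 | (x : Δ) ∈ gens} = gens := by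
    ext y
    constructor
    · rintro ⟨x, hx, rfl⟩; exact hx
    · intro hy; exact ⟨⟨y, gens_sub_Δ0 hy⟩, hy, rfl⟩
  rw [himg, closure_gens, ← MonoidHom.range_eq_map, Subgroup.range_subtype]

/-! ### The normal subgroups Δ^{k̂} -/

def Nhat (k : Fin 3) : Subgroup Δ :=
  Subgroup.normalClosure {x : Δ | ∃ j : Fin 3, j ≠ k ∧ x = R j}

lemma Nhat_ne_top (k : Fin 3) : Nhat k ≠ ⊤ := by
  intro htop
  set π : Δ →* ℤˣ := PresentedGroup.toGroup (f := fun t => if t = k then (-1 : ℤˣ) else 1)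
    (by rintro r ⟨i, rfl⟩
        rw [map_pow, FreeGroup.lift_apply_of, Int.units_sq]) with hπ
  have hker : Nhat k ≤ π.ker := by
    apply Subgroup.normalClosure_le_normal
    rintro x ⟨j, hj, rfl⟩
    show π (R j) = 1
    rw [hπ]
    show PresentedGroup.toGroup _ (PresentedGroup.of j) = 1
    rw [PresentedGroup.toGroup.of, if_neg hj]
  have hRk : π (R k) = -1 := by
    rw [hπ]
    show PresentedGroup.toGroup _ (PresentedGroup.of k) = -1
    rw [PresentedGroup.toGroup.of, if_pos rfl]
  have : R k ∈ Nhat k := htop ▸ Subgroup.mem_top _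
  have : π (R k) = 1 := hker this
  rw [hRk] at this
  exact absurd this (by decide)

lemma conj_mem_Nhat {k j : Fin 3} (hjk : j ≠ k) (c : Δ) : c⁻¹ * R j * c ∈ Nhat k := by
  have h1 : R j ∈ Nhat k := Subgroup.subset_normalClosure ⟨j, hjk, rfl⟩
  haveI : (Nhat k).Normal := Subgroup.normalClosure_normal
  simpa using this.conj_mem _ h1 c⁻¹

end Stmt11Aux

theorem stmt11 (φ : Δ0 →* Δ) (hφ : Function.Surjective φ)
    (h : Δ) (hh : ∃ i : Fin 3, ∃ c : Δ, h = c⁻¹ * R i * c) :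
    ∃ g : Δ0, (∃ s ∈ gens, ∃ c ∈ Δ0, (g : Δ) = c⁻¹ * s * c) ∧ φ g = h := by
  open Stmt11Aux in
  obtain ⟨k, c, hh⟩ := hh
  -- Step 1: some generator maps to a conjugate of R k
  have key : ∃ s : Δ, ∃ hs : s ∈ gens, ∃ d : Δ, φ ⟨s, gens_sub_Δ0 hs⟩ = d⁻¹ * R k * d := by
    by_contra hcon
    push_neg at hcon
    have hsub : ∀ x : Δ0, (x : Δ) ∈ gens → φ x ∈ Nhat k := by
      intro x hx
      have hsq : φ x * φ x = 1 := by
        rw [← map_mul]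
        have hxx : x * x = 1 := Subtype.ext (by
          show ((x : Δ) * (x : Δ) : Δ) = 1
          exact gens_sq hx)
        rw [hxx, map_one]
      rcases delta_torsion _ hsq with h1 | ⟨m, d, hd⟩
      · rw [h1]; exact Subgroup.one_mem _
      · by_cases hmk : m = k
        · subst hmk
          exact absurd hd (hcon (x : Δ) hx d)
        · rw [hd]; exact conj_mem_Nhat hmk d
    have hle : MonoidHom.range φ ≤ Nhat k := by
      rw [MonoidHom.range_eq_map, ← gens0_top, MonoidHom.map_closure, Subgroup.closure_le]
      rintro y ⟨x, hx, rfl⟩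
      exact hsub x hx
    have htop : MonoidHom.range φ = ⊤ := MonoidHom.range_eq_top.mpr hφ
    rw [htop] at hle
    exact Nhat_ne_top k (top_le_iff.mp hle)
  obtain ⟨s, hs, d, hd⟩ := key
  -- Step 2: adjust the conjugator using surjectivity
  obtain ⟨e, he⟩ := hφ (d⁻¹ * c)
  refine ⟨e⁻¹ * ⟨s, gens_sub_Δ0 hs⟩ * e, ⟨s, hs, (e : Δ), e.2, by push_cast; ring_nf⟩, ?_⟩
  rw [map_mul, map_mul, map_inv, he, hd, hh]
  group
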